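/- Let k ≥ 4 and n ≥ 3(k-1). For integers j with 4 ≤ j ≤ k, define g(j) = C(n-k-j, k-j)·C(n-k, k)^{-1}·(1 + f(j)/(k(k-1))), where f(j) = -(n-k)j² + (n+1)(n-k)j - n(n-1). Then g(j) ≤ 1 for all integers j with 4 ≤ j ≤ k. -/

import Mathlib

set_option maxHeartbeats 1000000

lemma aux_pow (k m : ℕ) (hm : 2*k ≤ m + 3) :
    ∀ d : ℕ, 4 + d ≤ k →
      2^d * Nat.choose k (4+d) * Nat.choose m 4 ≤ Nat.choose k 4 * Nat.choose m (4+d) := by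
  intro d
  induction d with
  | zero => intro _; simp [Nat.mul_comm]
  | succ d ih =>
    intro hdk
    have hj : 4 + d ≤ k := by omega
    have IH := ih hj
    have e1 := Nat.choose_succ_right_eq k (4+d)
    have e2 := Nat.choose_succ_right_eq m (4+d)
    have h2 : 2 * (k - (4+d)) ≤ m - (4+d) := by omega
    have hpos : 0 < 4 + d + 1 := by omega
    refine Nat.le_of_mul_le_mul_right ?_ hpos
    calc 2^(d+1) * Nat.choose k (4+(d+1)) * Nat.choose m 4 * (4+d+1)
        = 2^d * Nat.choose m 4 * 2 * (Nat.choose k (4+d+1) * (4+d+1)) := by ring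
      _ = 2^d * Nat.choose m 4 * 2 * (Nat.choose k (4+d) * (k - (4+d))) := by rw [e1]
      _ = (2^d * Nat.choose k (4+d) * Nat.choose m 4) * (2*(k - (4+d))) := by ring
      _ ≤ (Nat.choose k 4 * Nat.choose m (4+d)) * (m - (4+d)) := Nat.mul_le_mul IH h2
      _ = Nat.choose k 4 * (Nat.choose m (4+d) * (m - (4+d))) := by ring
      _ = Nat.choose k 4 * (Nat.choose m (4+d+1) * (4+d+1)) := by rw [e2]
      _ = Nat.choose k 4 * Nat.choose m (4+(d+1)) * (4+d+1) := by ring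

lemma cast_choose_four {k : ℕ} (hk : 4 ≤ k) :
    (Nat.choose k 4 : ℝ) * 24 = (k:ℝ) * ((k:ℝ)-1) * ((k:ℝ)-2) * ((k:ℝ)-3) := by
  obtain ⟨c, rfl⟩ : ∃ c, k = c + 4 := ⟨k - 4, by omega⟩
  have h : (c+4).descFactorial 4 = (c+4)*(c+3)*(c+2)*(c+1) := by
    simp [Nat.descFactorial]; ring
  have h2 : (c+4).descFactorial 4 = 24 * (c+4).choose 4 := by
    rw [Nat.descFactorial_eq_factorial_mul_choose]; norm_num [Nat.factorial]
  have h3 : 24 * (c+4).choose 4 = (c+4)*(c+3)*(c+2)*(c+1) := by omega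
  have h4 := congrArg (Nat.cast (R := ℝ)) h3
  push_cast at h4 ⊢
  linear_combination h4

lemma real_part (K M J P cj Cj c4 C4 : ℝ)
    (hs : 0 ≤ K - 4) (ht : 0 ≤ M - (2*K-3)) (hJ4 : 4 ≤ J)
    (hP : J - 3 ≤ P)
    (hcj : 0 ≤ cj) (hCj : 0 ≤ Cj) (hC4 : 0 < C4)
    (haux : P * cj * C4 ≤ c4 * Cj)
    (hc4e : c4 * 24 = K*(K-1)*(K-2)*(K-3))
    (hC4e : C4 * 24 = M*(M-1)*(M-2)*(M-3)) :
    cj * (K*(K-1) + (-((M+K) - K) * J^2 + ((M+K)+1)*((M+K)-K)*J - (M+K)*((M+K)-1)))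
      ≤ Cj * (K*(K-1)) := by
  have hW : (0:ℝ) < K*(K-1) := by nlinarith
  have hA : M*(M+K-7) ≤ K*(K-1) + 4*M*(M+K-3) - (M+K)*((M+K)-1) := by
    nlinarith [mul_nonneg hs ht, mul_nonneg hs hs, mul_nonneg ht ht]
  have hM5 : (5:ℝ) ≤ M := by linarith
  have hMK7 : 0 ≤ M*(M+K-7) := mul_nonneg (by linarith) (by linarith)
  have hX4 : 0 ≤ K*(K-1) + 4*M*(M+K-3) - (M+K)*((M+K)-1) := by linarith
  have hXle : K*(K-1) + (-((M+K) - K) * J^2 + ((M+K)+1)*((M+K)-K)*J - (M+K)*((M+K)-1))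
      ≤ P * (K*(K-1) + 4*M*(M+K-3) - (M+K)*((M+K)-1)) := by
    have h1 : M*((M+K)-3-J) ≤ K*(K-1) + 4*M*(M+K-3) - (M+K)*((M+K)-1) := by
      nlinarith [hA, mul_nonneg (by linarith : (0:ℝ) ≤ M) (by linarith : (0:ℝ) ≤ J - 4)]
    have h2 : (J-4) * (M*((M+K)-3-J))
        ≤ (J-4) * (K*(K-1) + 4*M*(M+K-3) - (M+K)*((M+K)-1)) :=
      mul_le_mul_of_nonneg_left h1 (by linarith)
    have h3 : (J-3) * (K*(K-1) + 4*M*(M+K-3) - (M+K)*((M+K)-1))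
        ≤ P * (K*(K-1) + 4*M*(M+K-3) - (M+K)*((M+K)-1)) :=
      mul_le_mul_of_nonneg_right hP hX4
    linarith [h2, h3]
  have hL2 : c4 * (K*(K-1) + 4*M*(M+K-3) - (M+K)*((M+K)-1)) ≤ C4 * (K*(K-1)) := by
    have q : (K-2)*(K-3)*(K*(K-1) + 4*M*(M+K-3) - (M+K)*((M+K)-1))
        ≤ M*(M-1)*(M-2)*(M-3) := by
      nlinarith [mul_nonneg ht ht, mul_nonneg (mul_nonneg ht ht) ht,
        mul_nonneg (mul_nonneg (mul_nonneg ht ht) ht) ht, mul_nonneg hs ht,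
        mul_nonneg hs (mul_nonneg ht ht), mul_nonneg hs (mul_nonneg (mul_nonneg ht ht) ht),
        mul_nonneg (mul_nonneg hs hs) ht, mul_nonneg (mul_nonneg hs hs) (mul_nonneg ht ht),
        mul_nonneg (mul_nonneg (mul_nonneg hs hs) hs) ht]
    have q2 := mul_le_mul_of_nonneg_left q hW.le
    have e3 : c4 * (K*(K-1) + 4*M*(M+K-3) - (M+K)*((M+K)-1)) * 24
        = (K*(K-1)*(K-2)*(K-3)) * (K*(K-1) + 4*M*(M+K-3) - (M+K)*((M+K)-1)) := by
      linear_combination (K*(K-1) + 4*M*(M+K-3) - (M+K)*((M+K)-1)) * hc4e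
    have e4 : C4 * (K*(K-1)) * 24 = M*(M-1)*(M-2)*(M-3)*(K*(K-1)) := by
      linear_combination (K*(K-1)) * hC4e
    linarith [q2, e3, e4]
  rcases le_or_gt (K*(K-1) + (-((M+K) - K) * J^2 + ((M+K)+1)*((M+K)-K)*J - (M+K)*((M+K)-1))) 0
    with hX | hX
  · have h0 : cj * (K*(K-1) + (-((M+K) - K) * J^2 + ((M+K)+1)*((M+K)-K)*J - (M+K)*((M+K)-1))) ≤ 0 :=
      mul_nonpos_of_nonneg_of_nonpos hcj hX
    have h1 : 0 ≤ Cj * (K*(K-1)) := mul_nonneg hCj hW.le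
    linarith
  · have t1 : C4 * (cj * (K*(K-1) + (-((M+K) - K) * J^2 + ((M+K)+1)*((M+K)-K)*J - (M+K)*((M+K)-1))))
        ≤ C4 * (cj * (P * (K*(K-1) + 4*M*(M+K-3) - (M+K)*((M+K)-1)))) :=
      mul_le_mul_of_nonneg_left (mul_le_mul_of_nonneg_left hXle hcj) hC4.le
    have t3 : (P * cj * C4) * (K*(K-1) + 4*M*(M+K-3) - (M+K)*((M+K)-1))
        ≤ (c4 * Cj) * (K*(K-1) + 4*M*(M+K-3) - (M+K)*((M+K)-1)) :=
      mul_le_mul_of_nonneg_right haux hX4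
    have t5 : Cj * (c4 * (K*(K-1) + 4*M*(M+K-3) - (M+K)*((M+K)-1))) ≤ Cj * (C4 * (K*(K-1))) :=
      mul_le_mul_of_nonneg_left hL2 hCj
    have t6 : C4 * (cj * (K*(K-1) + (-((M+K) - K) * J^2 + ((M+K)+1)*((M+K)-K)*J - (M+K)*((M+K)-1))))
        ≤ C4 * (Cj * (K*(K-1))) := by linarith [t1, t3, t5]
    exact le_of_mul_le_mul_left t6 hC4

/-- g(j) = C(n-k-j,k-j)/C(n-k,k) · (1 + f(j)/(k(k-1))) ≤ 1 for integers 4 ≤ j ≤ k,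
where f(j) = -(n-k)j² + (n+1)(n-k)j - n(n-1). -/
theorem stmt_3 (n k : ℕ) (hk : 4 ≤ k) (hn : 3 * (k - 1) ≤ n) :
    ∀ j : ℕ, 4 ≤ j → j ≤ k →
      (Nat.choose (n - k - j) (k - j) : ℝ) * ((Nat.choose (n - k) k : ℝ))⁻¹ *
        (1 + (-((n : ℝ) - k) * (j : ℝ) ^ 2 + ((n : ℝ) + 1) * ((n : ℝ) - k) * (j : ℝ)
              - (n : ℝ) * ((n : ℝ) - 1)) / ((k : ℝ) * ((k : ℝ) - 1))) ≤ 1 := by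
  intro j hj4 hjk
  set m := n - k with hm
  have hkn : k ≤ n := by omega
  have hmnk : n = m + k := by omega
  have hm2k : 2*k ≤ m + 3 := by omega
  have hkm : k ≤ m := by omega
  have hjm : j ≤ m := le_trans hjk hkm
  have h4m : 4 ≤ m := by omega
  have hN : (n:ℝ) = (m:ℝ) + (k:ℝ) := by rw [hmnk]; push_cast; ring
  rw [hN]
  have hW : (0:ℝ) < (k:ℝ) * ((k:ℝ)-1) := by
    have : (4:ℝ) ≤ (k:ℝ) := by exact_mod_cast hk
    nlinarith
  have hCmj : (0:ℝ) < (Nat.choose m j : ℝ) := by exact_mod_cast Nat.choose_pos hjm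
  have hCmk : (0:ℝ) < (Nat.choose m k : ℝ) := by exact_mod_cast Nat.choose_pos hkm
  have hCm4 : (0:ℝ) < (Nat.choose m 4 : ℝ) := by exact_mod_cast Nat.choose_pos h4m
  -- rewrite the binomial ratio
  have hid := Nat.choose_mul (n := m) hjk
  have hidR := congrArg (Nat.cast (R := ℝ)) hid
  push_cast at hidR
  have hrw' : (Nat.choose (m - j) (k - j) : ℝ) * ((Nat.choose m k : ℝ))⁻¹
      = (Nat.choose k j : ℝ) / (Nat.choose m j : ℝ) := by
    rw [← div_eq_mul_inv, div_eq_div_iff hCmk.ne' hCmj.ne']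
    linear_combination -hidR
  rw [hrw', div_mul_eq_mul_div, div_le_one hCmj]
  have eq1 : (Nat.choose k j : ℝ) *
      (1 + (-((m:ℝ) + (k:ℝ) - (k:ℝ)) * (j:ℝ)^2 + ((m:ℝ) + (k:ℝ) + 1) * ((m:ℝ) + (k:ℝ) - (k:ℝ)) * (j:ℝ)
          - ((m:ℝ) + (k:ℝ)) * ((m:ℝ) + (k:ℝ) - 1)) / ((k:ℝ) * ((k:ℝ) - 1)))
      = (Nat.choose k j : ℝ) *
        ((k:ℝ) * ((k:ℝ)-1) + (-(((m:ℝ) + (k:ℝ)) - (k:ℝ)) * (j:ℝ)^2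
          + (((m:ℝ) + (k:ℝ)) + 1) * (((m:ℝ) + (k:ℝ)) - (k:ℝ)) * (j:ℝ)
          - ((m:ℝ) + (k:ℝ)) * (((m:ℝ) + (k:ℝ)) - 1))) / ((k:ℝ) * ((k:ℝ) - 1)) := by
    rw [one_add_div hW.ne', mul_div_assoc]
  rw [eq1, div_le_iff₀ hW]
  -- prepare the pieces for real_part
  have hauxN := aux_pow k m hm2k (j - 4) (by omega)
  rw [show 4 + (j - 4) = j from by omega] at hauxN
  have hauxR : (2:ℝ)^(j-4) * (Nat.choose k j : ℝ) * (Nat.choose m 4 : ℝ)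
      ≤ (Nat.choose k 4 : ℝ) * (Nat.choose m j : ℝ) := by exact_mod_cast hauxN
  have hP : (j:ℝ) - 3 ≤ (2:ℝ)^(j-4) := by
    have h1 : j - 4 < 2^(j-4) := Nat.lt_two_pow_self
    have h2 : ((j - 4 : ℕ) : ℝ) + 1 ≤ ((2^(j-4) : ℕ) : ℝ) := by exact_mod_cast h1
    have h3 : ((j - 4 : ℕ) : ℝ) = (j:ℝ) - 4 := by
      rw [Nat.cast_sub (by omega : 4 ≤ j)]; norm_num
    push_cast at h2
    rw [h3] at h2
    linarith
  exact real_part (k:ℝ) (m:ℝ) (j:ℝ) ((2:ℝ)^(j-4))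
    (Nat.choose k j : ℝ) (Nat.choose m j : ℝ) (Nat.choose k 4 : ℝ) (Nat.choose m 4 : ℝ)
    (by
      have h4k : (4:ℝ) ≤ (k:ℝ) := by exact_mod_cast hk
      linarith)
    (by
      have h1 : ((2*k:ℕ):ℝ) ≤ ((m + 3 : ℕ):ℝ) := by exact_mod_cast hm2k
      push_cast at h1
      linarith)
    (by
      have h4j : (4:ℝ) ≤ (j:ℝ) := by exact_mod_cast hj4
      linarith)
    hP (Nat.cast_nonneg _) (Nat.cast_nonneg _) hCm4 hauxR
    (cast_choose_four hk) (cast_choose_four h4m)
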